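/- Let D ⊆ ℂ^d be a convex domain and let v ∈ ℂ^d be a unit vector such that, regarding D as a convex subset of ℝ^{2d}, the set of directions at infinity of D is exactly {v, −v}. Then for every z₀ ∈ D there exists A ≥ 1 such that (1/A)(b − a) ≤ K_D(z₀ + a·v, z₀ + b·v) ≤ A(b − a) for all real numbers a ≤ b; that is, the curve t ↦ z₀ + t·v is an (A,0)-quasi-geodesic for K_D. -/

import Mathlib

open Set Metric Filter

noncomputable section

/-- Inverse hyperbolic tangent, `artanh x = (1/2) log((1+x)/(1-x))`. -/
def artanh (x : ℝ) : ℝ := Real.log ((1 + x) / (1 - x)) / 2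

/-- The Poincaré distance on the unit disc `𝔻 ⊆ ℂ`:
`ρ(a,b) = artanh |(a − b)/(1 − conj(a)·b)|`. -/
def poincareDist (a b : ℂ) : ℝ :=
  artanh ‖(a - b) / (1 - (starRingEnd ℂ) a * b)‖

/-- The Kobayashi pseudodistance on a domain `D ⊆ ℂ^d`: the infimum of `Σ ρ(aᵢ,bᵢ)` over all
finite chains of holomorphic maps `fᵢ : 𝔻 → D` with `f₁(a₁) = x`, `fᵢ(bᵢ) = fᵢ₊₁(aᵢ₊₁)` and
`f_N(b_N) = y`. -/
def kobayashiDist {d : ℕ} (D : Set (EuclideanSpace ℂ (Fin d)))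
    (x y : EuclideanSpace ℂ (Fin d)) : ℝ :=
  sInf {c : ℝ | ∃ (N : ℕ) (f : Fin (N + 1) → ℂ → EuclideanSpace ℂ (Fin d))
      (a b : Fin (N + 1) → ℂ),
    (∀ i, DifferentiableOn ℂ (f i) (Metric.ball (0 : ℂ) 1)) ∧
    (∀ i, Set.MapsTo (f i) (Metric.ball (0 : ℂ) 1) D) ∧
    (∀ i, a i ∈ Metric.ball (0 : ℂ) 1) ∧ (∀ i, b i ∈ Metric.ball (0 : ℂ) 1) ∧
    f 0 (a 0) = x ∧ f (Fin.last N) (b (Fin.last N)) = y ∧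
    (∀ i : Fin N, f (Fin.castSucc i) (b (Fin.castSucc i)) = f (Fin.succ i) (a (Fin.succ i))) ∧
    c = ∑ i, poincareDist (a i) (b i)}

/-- A domain `D ⊆ ℂ^d` is ℂ-proper if it contains no complex affine line. -/
def CProper {d : ℕ} (D : Set (EuclideanSpace ℂ (Fin d))) : Prop :=
  ¬ ∃ (z v : EuclideanSpace ℂ (Fin d)), v ≠ 0 ∧ ∀ t : ℂ, z + t • v ∈ D


/-- The set of directions at infinity of `D ⊆ ℂ^d ≅ ℝ^{2d}`: unit vectors `u` such that some
real ray `x + ℝ≥0 • u` starting in `D` stays in `D`. -/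
def directionsAtInfinity {d : ℕ} (D : Set (EuclideanSpace ℂ (Fin d))) :
    Set (EuclideanSpace ℂ (Fin d)) :=
  {u | ‖u‖ = 1 ∧ ∃ x ∈ D, ∀ t : ℝ, 0 ≤ t → x + t • u ∈ D}

local notation "conj'" => (starRingEnd ℂ)
open Topology

lemma artanh_nonneg {x : ℝ} (hx : 0 ≤ x) : 0 ≤ artanh x := by
  unfold artanh
  rcases lt_trichotomy x 1 with h | h | h
  · have h1 : (1:ℝ) ≤ (1 + x) / (1 - x) := by
      rw [le_div_iff₀ (by linarith)]; linarith
    have := Real.log_nonneg h1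
    linarith
  · rw [h]; norm_num
  · have h2 : (1 + x) / (1 - x) = -((1 + x) / (x - 1)) := by
      rw [← neg_div, div_eq_div_iff (by linarith) (by linarith)]; ring
    rw [h2, Real.log_neg_eq_log]
    have h1 : (1:ℝ) ≤ (1 + x) / (x - 1) := by
      rw [le_div_iff₀ (by linarith)]; linarith
    have := Real.log_nonneg h1
    linarith

lemma artanh_le_artanh {x y : ℝ} (hx : 0 ≤ x) (hxy : x ≤ y) (hy : y < 1) :
    artanh x ≤ artanh y := by
  unfold artanh
  have h1 : (0:ℝ) < (1 + x) / (1 - x) := by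
    apply div_pos <;> linarith
  have h2 : (1 + x) / (1 - x) ≤ (1 + y) / (1 - y) := by
    rw [div_le_div_iff₀ (by linarith) (by linarith)]; nlinarith
  have := Real.log_le_log h1 h2
  linarith

lemma Real.tanh_eq_exp (t : ℝ) :
    Real.tanh t = (Real.exp (2*t) - 1) / (Real.exp (2*t) + 1) := by
  rw [Real.tanh_eq_sinh_div_cosh, Real.sinh_eq, Real.cosh_eq]
  have h1 : Real.exp (2*t) = Real.exp t * Real.exp t := by
    rw [← Real.exp_add]; norm_num [two_mul]
  have h2 := Real.exp_pos t
  have h3 := Real.exp_pos (2*t)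
  rw [Real.exp_neg, h1]
  field_simp

lemma artanh_tanh (t : ℝ) : artanh (Real.tanh t) = t := by
  unfold artanh
  rw [Real.tanh_eq_exp]
  have h3 := Real.exp_pos (2*t)
  have h1 : 1 + (Real.exp (2*t) - 1) / (Real.exp (2*t) + 1)
      = 2 * Real.exp (2*t) / (Real.exp (2*t) + 1) := by
    field_simp; ring
  have h2 : 1 - (Real.exp (2*t) - 1) / (Real.exp (2*t) + 1)
      = 2 / (Real.exp (2*t) + 1) := by
    field_simp; ring
  rw [h1, h2]
  have h4 : 2 * Real.exp (2*t) / (Real.exp (2*t) + 1) / (2 / (Real.exp (2*t) + 1))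
      = Real.exp (2*t) := by
    field_simp
  rw [h4, Real.log_exp]
  ring

lemma tanh_nonneg {t : ℝ} (ht : 0 ≤ t) : 0 ≤ Real.tanh t := by
  rw [Real.tanh_eq_sinh_div_cosh]
  exact div_nonneg (by rw [← Real.sinh_zero]; exact Real.sinh_le_sinh.2 ht) (Real.cosh_pos t).le

lemma abs_tanh_lt_one (x : ℝ) : |Real.tanh x| < 1 := by
  rw [abs_lt, Real.tanh_eq_sinh_div_cosh]
  have hc := Real.cosh_pos x
  constructor
  · rw [lt_div_iff₀ hc]
    have := Real.sinh_lt_cosh (-x)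
    rw [Real.sinh_neg, Real.cosh_neg] at this
    linarith
  · rw [div_lt_one hc]
    exact Real.sinh_lt_cosh x

lemma abs_tanh (x : ℝ) : |Real.tanh x| = Real.tanh |x| := by
  rcases abs_cases x with ⟨h1, h2⟩ | ⟨h1, h2⟩
  · rw [h1, abs_of_nonneg (tanh_nonneg h2)]
  · rw [h1, Real.tanh_neg]
    have : 0 ≤ -Real.tanh x := by
      rw [← Real.tanh_neg]; exact tanh_nonneg (neg_nonneg.2 h2.le)
    rw [abs_of_nonpos (by linarith)]

lemma tanh_sub_div (s t : ℝ) :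
    (Real.tanh s - Real.tanh t) / (1 - Real.tanh s * Real.tanh t) = Real.tanh (s - t) := by
  rw [Real.tanh_eq_sinh_div_cosh, Real.tanh_eq_sinh_div_cosh, Real.tanh_eq_sinh_div_cosh]
  have hs := (Real.cosh_pos s).ne'
  have ht := (Real.cosh_pos t).ne'
  have hst := (Real.cosh_pos (s - t)).ne'
  rw [Real.sinh_sub, Real.cosh_sub]
  have hd : Real.cosh s * Real.cosh t - Real.sinh s * Real.sinh t ≠ 0 := by
    rw [← Real.cosh_sub]; exact hst
  field_simp

lemma poincareDist_tanh (s t : ℝ) :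
    poincareDist ((Real.tanh s : ℝ) : ℂ) ((Real.tanh t : ℝ) : ℂ) = |s - t| := by
  unfold poincareDist
  rw [Complex.conj_ofReal]
  have h : ((Real.tanh s : ℝ) : ℂ) - ((Real.tanh t : ℝ) : ℂ) = (((Real.tanh s - Real.tanh t : ℝ)) : ℂ) := by
    push_cast; ring
  have h2 : (1 : ℂ) - ((Real.tanh s : ℝ) : ℂ) * ((Real.tanh t : ℝ) : ℂ)
      = (((1 - Real.tanh s * Real.tanh t : ℝ)) : ℂ) := by push_cast; ring
  rw [h, h2, ← Complex.ofReal_div, Complex.norm_real, Real.norm_eq_abs, tanh_sub_div, abs_tanh, artanh_tanh]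

lemma poincareDist_nonneg (a b : ℂ) : 0 ≤ poincareDist a b :=
  artanh_nonneg (norm_nonneg _)


lemma normSq_mobius (a z : ℂ) :
    Complex.normSq (1 - conj' a * z) - Complex.normSq (z - a)
      = (1 - Complex.normSq a) * (1 - Complex.normSq z) := by
  have key : (1 - conj' a * z) * conj' (1 - conj' a * z) - (z - a) * conj' (z - a)
      = (1 - a * conj' a) * (1 - z * conj' z) := by
    simp only [map_sub, map_mul, map_one, Complex.conj_conj]
    ring
  rw [Complex.mul_conj, Complex.mul_conj, Complex.mul_conj, Complex.mul_conj] at key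
  exact_mod_cast congrArg Complex.re key

lemma one_sub_conj_mul_ne_zero {a z : ℂ} (ha : ‖a‖ < 1) (hz : ‖z‖ < 1) :
    1 - conj' a * z ≠ 0 := by
  intro h
  have h1 : (1:ℂ) = conj' a * z := by linear_combination h
  have : (1:ℝ) = ‖conj' a * z‖ := by rw [← h1]; simp
  rw [norm_mul, Complex.norm_conj] at this
  nlinarith [norm_nonneg a, norm_nonneg z]

lemma mobius_abs_lt_one {a z : ℂ} (ha : ‖a‖ < 1) (hz : ‖z‖ < 1) :
    ‖(z - a) / (1 - conj' a * z)‖ < 1 := by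
  have hden := one_sub_conj_mul_ne_zero ha hz
  rw [norm_div, div_lt_one (by simpa [norm_pos_iff] using hden)]
  have h1 : Complex.normSq (z - a) < Complex.normSq (1 - conj' a * z) := by
    have := normSq_mobius a z
    have ha2 : Complex.normSq a < 1 := by
      rw [← Complex.sq_norm]; nlinarith [norm_nonneg a]
    have hz2 : Complex.normSq z < 1 := by
      rw [← Complex.sq_norm]; nlinarith [norm_nonneg z]
    nlinarith
  rw [Complex.norm_def, Complex.norm_def]
  exact Real.sqrt_lt_sqrt (Complex.normSq_nonneg _) h1

lemma mobius_mem_ball {a z : ℂ} (ha : a ∈ ball (0:ℂ) 1) (hz : z ∈ ball (0:ℂ) 1) :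
    (z - a) / (1 - conj' a * z) ∈ ball (0:ℂ) 1 := by
  rw [mem_ball_zero_iff] at *
  exact mobius_abs_lt_one ha hz

lemma mobius_inv {a z : ℂ} (ha : ‖a‖ < 1) (hz : ‖z‖ < 1) :
    ((z - a) / (1 - conj' a * z) - -a) / (1 - conj' (-a) * ((z - a) / (1 - conj' a * z))) = z := by
  have hden := one_sub_conj_mul_ne_zero ha hz
  have h2 : (1:ℂ) - a * conj' a ≠ 0 := by
    intro h
    have h1 : (1:ℂ) = a * conj' a := by linear_combination h
    have : (1:ℝ) = ‖a * conj' a‖ := by rw [← h1]; simp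
    rw [norm_mul, Complex.norm_conj] at this
    nlinarith [norm_nonneg a]
  rw [map_neg]
  have h2' : (1:ℂ) - a * conj' a ≠ 0 := h2
  have e1 : (z - a) / (1 - conj' a * z) + a = z * (1 - a * conj' a) / (1 - conj' a * z) := by
    rw [div_add' _ _ _ hden]; congr 1; ring
  have e2 : 1 - -(conj' a) * ((z - a) / (1 - conj' a * z)) = (1 - a * conj' a) / (1 - conj' a * z) := by
    field_simp; ring
  rw [sub_neg_eq_add, e1, e2]
  rw [div_div_div_eq, mul_assoc, mul_div_assoc,
    mul_comm ((1:ℂ) - conj' a * z) ((1:ℂ) - a * conj' a),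
    div_self (mul_ne_zero h2' hden), mul_one]

lemma mobius_differentiableOn (a : ℂ) (ha : ‖a‖ < 1) :
    DifferentiableOn ℂ (fun z => (z - a) / (1 - conj' a * z)) (ball (0:ℂ) 1) := by
  apply DifferentiableOn.div
  · exact (differentiable_id.sub_const a).differentiableOn
  · exact ((differentiable_const _).mul differentiable_id).const_sub 1 |>.differentiableOn
  · intro z hz
    exact one_sub_conj_mul_ne_zero ha (by simpa [mem_ball_zero_iff] using hz)

/-- Schwarz–Pick lemma on the unit disc. -/
lemma schwarz_pick {G : ℂ → ℂ} (hd : DifferentiableOn ℂ G (ball 0 1))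
    (hm : MapsTo G (ball 0 1) (ball 0 1)) {a b : ℂ}
    (ha : a ∈ ball (0:ℂ) 1) (hb : b ∈ ball (0:ℂ) 1) :
    ‖(G b - G a) / (1 - conj' (G a) * G b)‖
      ≤ ‖(b - a) / (1 - conj' a * b)‖ := by
  have ha' : ‖a‖ < 1 := by simpa [mem_ball_zero_iff] using ha
  have hb' : ‖b‖ < 1 := by simpa [mem_ball_zero_iff] using hb
  have hGa : G a ∈ ball (0:ℂ) 1 := hm ha
  have hGa' : ‖G a‖ < 1 := by simpa [mem_ball_zero_iff] using hGa
  have hna : (-a) ∈ ball (0:ℂ) 1 := by simpa [mem_ball_zero_iff] using ha'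
  set φinv : ℂ → ℂ := fun z => (z - -a) / (1 - conj' (-a) * z) with hφinv
  set ψ : ℂ → ℂ := fun z => (z - G a) / (1 - conj' (G a) * z) with hψ
  set H : ℂ → ℂ := fun z => ψ (G (φinv z)) with hH
  have hφinv_maps : MapsTo φinv (ball (0:ℂ) 1) (ball (0:ℂ) 1) :=
    fun z hz => mobius_mem_ball hna hz
  have hψ_maps : MapsTo ψ (ball (0:ℂ) 1) (ball (0:ℂ) 1) :=
    fun z hz => mobius_mem_ball hGa hz
  have hH_maps : MapsTo H (ball (0:ℂ) 1) (ball (0:ℂ) 1) :=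
    fun z hz => hψ_maps (hm (hφinv_maps hz))
  have hH_diff : DifferentiableOn ℂ H (ball (0:ℂ) 1) := by
    apply DifferentiableOn.comp (t := ball (0:ℂ) 1)
      (mobius_differentiableOn (G a) hGa')
      (DifferentiableOn.comp (t := ball (0:ℂ) 1) hd
        (mobius_differentiableOn (-a) (by simpa using ha')) hφinv_maps)
      (fun z hz => hm (hφinv_maps hz))
  have hH0 : H 0 = 0 := by
    have h1 : φinv 0 = a := by simp [hφinv]
    simp [hH, h1, hψ]
  have key := Complex.norm_le_norm_of_mapsTo_ball hH_diff (hH_maps.mono_right ball_subset_closedBall) hH0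
    (z := (b - a) / (1 - conj' a * b)) (by simpa using mobius_abs_lt_one ha' hb')
  have hfix : φinv ((b - a) / (1 - conj' a * b)) = b := mobius_inv ha' hb'
  simp only [hH, hψ, hφinv] at key
  rw [mobius_inv ha' hb'] at key
  exact key

lemma two_mul_im (w : ℂ) : ((2:ℂ) * w).im = 2 * w.im := by
  simp [Complex.mul_im]

lemma exp_re_pos {w : ℂ} (hw : |w.im| < Real.pi/4) : 0 < (Complex.exp (2*w)).re := by
  rw [Complex.exp_re]
  apply mul_pos (Real.exp_pos _)
  apply Real.cos_pos_of_mem_Ioo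
  rw [two_mul_im]
  have := Real.pi_pos
  rcases abs_lt.1 hw with ⟨h1, h2⟩
  constructor <;> [linarith; linarith]

lemma exp_two_add_one_ne_zero {w : ℂ} (hw : |w.im| < Real.pi/4) :
    Complex.exp (2*w) + 1 ≠ 0 := by
  intro h
  have := congrArg Complex.re h
  simp only [Complex.add_re, Complex.one_re, Complex.zero_re] at this
  have := exp_re_pos hw
  linarith

lemma cosh_ne_zero_strip {w : ℂ} (hw : |w.im| < Real.pi/4) : Complex.cosh w ≠ 0 := by
  have h1 : Complex.cosh w = (Complex.exp (2*w) + 1) * Complex.exp (-w) / 2 := by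
    rw [Complex.cosh]
    have e : (2:ℂ)*w + -w = w := by ring
    rw [add_mul, one_mul, ← Complex.exp_add, e]
  rw [h1]
  apply div_ne_zero _ two_ne_zero
  exact mul_ne_zero (exp_two_add_one_ne_zero hw) (Complex.exp_ne_zero _)

lemma tanh_eq_exp_c {w : ℂ} (hw : |w.im| < Real.pi/4) :
    Complex.tanh w = (Complex.exp (2*w) - 1) / (Complex.exp (2*w) + 1) := by
  rw [Complex.tanh_eq_sinh_div_cosh, Complex.sinh, Complex.cosh]
  have hE := Complex.exp_ne_zero w
  have hden := exp_two_add_one_ne_zero hw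
  have hsum : Complex.exp w + Complex.exp (-w) ≠ 0 := by
    intro h
    have : Complex.cosh w = 0 := by rw [Complex.cosh, h]; simp
    exact cosh_ne_zero_strip hw this
  have hmul : Complex.exp (-w) * Complex.exp w = 1 := by
    rw [← Complex.exp_add]; simp
  have hp : Complex.exp (2*w) = Complex.exp w * Complex.exp w := by
    rw [← Complex.exp_add]; ring_nf
  rw [div_div_div_eq, div_eq_div_iff (by simpa using mul_ne_zero two_ne_zero hsum) hden]
  linear_combination (-4*Complex.exp (-w)) * hp - 4*Complex.exp w * hmul

lemma abs_tanh_lt_one_c {w : ℂ} (hw : |w.im| < Real.pi/4) :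
    ‖Complex.tanh w‖ < 1 := by
  rw [tanh_eq_exp_c hw, norm_div,
    div_lt_one (by simpa [norm_pos_iff] using exp_two_add_one_ne_zero hw)]
  have h1 : Complex.normSq (Complex.exp (2*w) - 1) < Complex.normSq (Complex.exp (2*w) + 1) := by
    have := exp_re_pos hw
    simp only [Complex.normSq_apply, Complex.add_re, Complex.add_im, Complex.sub_re,
      Complex.sub_im, Complex.one_re, Complex.one_im]
    nlinarith
  rw [Complex.norm_def, Complex.norm_def]
  exact Real.sqrt_lt_sqrt (Complex.normSq_nonneg _) h1

lemma tanh_abs_sub (r1 r2 : ℝ) :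
    Real.tanh |r2 - r1| = |Real.exp (2*r2) - Real.exp (2*r1)| / (Real.exp (2*r1) + Real.exp (2*r2)) := by
  have main : ∀ s t : ℝ, s ≤ t →
      Real.tanh |t - s| = |Real.exp (2*t) - Real.exp (2*s)| / (Real.exp (2*s) + Real.exp (2*t)) := by
    intro s t hst
    have hexp : Real.exp (2*s) ≤ Real.exp (2*t) := Real.exp_le_exp.2 (by linarith)
    rw [abs_of_nonneg (by linarith), abs_of_nonneg (by linarith), Real.tanh_eq_exp]
    have e : Real.exp (2*(t - s)) = Real.exp (2*t) / Real.exp (2*s) := by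
      rw [← Real.exp_sub]; ring_nf
    have h1 := (Real.exp_pos (2*s)).ne'
    have h2 := Real.exp_pos (2*s)
    have h3 := Real.exp_pos (2*t)
    rw [e, div_eq_div_iff (by positivity) (by positivity)]
    field_simp
    ring
  rcases le_total r1 r2 with h | h
  · exact main r1 r2 h
  · rw [abs_sub_comm, abs_sub_comm (Real.exp (2*r2)), add_comm]
    exact main r2 r1 h

lemma strip_re_bound {g : ℂ → ℂ} (hd : DifferentiableOn ℂ g (ball 0 1))
    (him : ∀ ζ ∈ ball (0:ℂ) 1, |(g ζ).im| < Real.pi/4)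
    {a b : ℂ} (ha : a ∈ ball (0:ℂ) 1) (hb : b ∈ ball (0:ℂ) 1) :
    |(g b).re - (g a).re| ≤ poincareDist a b := by
  set G : ℂ → ℂ := fun ζ => Complex.tanh (g ζ) with hG
  have hGd : DifferentiableOn ℂ G (ball 0 1) := by
    have : G = fun ζ => Complex.sinh (g ζ) / Complex.cosh (g ζ) := by
      funext ζ; rw [hG]; exact Complex.tanh_eq_sinh_div_cosh _
    rw [this]
    exact DifferentiableOn.div
      (Complex.differentiable_sinh.comp_differentiableOn hd)
      (Complex.differentiable_cosh.comp_differentiableOn hd)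
      (fun ζ hζ => cosh_ne_zero_strip (him ζ hζ))
  have hGm : MapsTo G (ball 0 1) (ball 0 1) := fun ζ hζ =>
    mem_ball_zero_iff.2 (abs_tanh_lt_one_c (him ζ hζ))
  have sp := schwarz_pick hGd hGm ha hb
  set p := Complex.exp (2 * g a) with hp
  set q := Complex.exp (2 * g b) with hq
  have hGa : G a = (p - 1) / (p + 1) := tanh_eq_exp_c (him a ha)
  have hGb : G b = (q - 1) / (q + 1) := tanh_eq_exp_c (him b hb)
  have hrp : 0 < p.re := exp_re_pos (him a ha)
  have hrq : 0 < q.re := exp_re_pos (him b hb)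
  have h2 : p + 1 ≠ 0 := exp_two_add_one_ne_zero (him a ha)
  have h3 : q + 1 ≠ 0 := exp_two_add_one_ne_zero (him b hb)
  have h4 : conj' p + 1 ≠ 0 := by
    intro h
    have := congrArg Complex.re h
    simp only [Complex.add_re, Complex.one_re, Complex.zero_re, Complex.conj_re] at this
    linarith
  have h1 : conj' p + q ≠ 0 := by
    intro h
    have := congrArg Complex.re h
    simp only [Complex.add_re, Complex.zero_re, Complex.conj_re] at this
    linarith
  have e1 : (q - 1)/(q + 1) - (p - 1)/(p + 1) = (2*(q - p)) / ((q + 1)*(p + 1)) := by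
    rw [div_sub_div _ _ h3 h2]
    congr 1
    ring
  have e2 : 1 - conj' ((p - 1)/(p + 1)) * ((q - 1)/(q + 1))
      = (2*(conj' p + q)) / ((conj' p + 1)*(q + 1)) := by
    rw [map_div₀, map_sub, map_one, map_add, map_one]
    field_simp
    ring
  have key : (G b - G a) / (1 - conj' (G a) * G b)
      = ((q - p) * (conj' p + 1)) / ((p + 1) * (conj' p + q)) := by
    rw [hGa, hGb, e1, e2, div_div_div_eq,
      div_eq_div_iff (mul_ne_zero (mul_ne_zero h3 h2) (mul_ne_zero two_ne_zero h1))
        (mul_ne_zero h2 h1)]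
    ring
  have habs : ‖(G b - G a) / (1 - conj' (G a) * G b)‖
      = ‖q - p‖ / ‖conj' p + q‖ := by
    rw [key, norm_div, norm_mul, norm_mul]
    have e : ‖conj' p + 1‖ = ‖p + 1‖ := by
      have e' : conj' p + 1 = conj' (p + 1) := by rw [map_add, map_one]
      rw [e', Complex.norm_conj]
    rw [e, mul_comm (‖p + 1‖) (‖conj' p + q‖),
      mul_div_mul_right _ _ (by simpa [norm_ne_zero_iff] using h2)]
  have habsp : ‖p‖ = Real.exp (2 * (g a).re) := by
    rw [hp, Complex.norm_exp]
    congr 1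
    simp [Complex.mul_re]
  have habsq : ‖q‖ = Real.exp (2 * (g b).re) := by
    rw [hq, Complex.norm_exp]
    congr 1
    simp [Complex.mul_re]
  have hlow : Real.tanh |(g b).re - (g a).re|
      ≤ ‖q - p‖ / ‖conj' p + q‖ := by
    rw [tanh_abs_sub]
    apply div_le_div₀ (norm_nonneg _)
    · rw [← habsp, ← habsq]
      calc |‖q‖ - ‖p‖| = |‖q‖ - ‖p‖| := by
            rfl
        _ ≤ ‖q - p‖ := abs_norm_sub_norm_le q p
        _ = ‖q - p‖ := rfl
    · simpa [norm_pos_iff] using h1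
    · calc ‖conj' p + q‖ ≤ ‖conj' p‖ + ‖q‖ :=
            norm_add_le _ _
        _ = Real.exp (2*(g a).re) + Real.exp (2*(g b).re) := by
            rw [Complex.norm_conj, habsp, habsq]
  have hμ : ‖(b - a) / (1 - conj' a * b)‖ < 1 :=
    mobius_abs_lt_one (by simpa [mem_ball_zero_iff] using ha)
      (by simpa [mem_ball_zero_iff] using hb)
  have hfinal : Real.tanh |(g b).re - (g a).re|
      ≤ ‖(b - a) / (1 - conj' a * b)‖ := by
    calc Real.tanh |(g b).re - (g a).re| ≤ ‖q - p‖ / ‖conj' p + q‖ := hlow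
      _ = ‖(G b - G a) / (1 - conj' (G a) * G b)‖ := habs.symm
      _ ≤ _ := sp
  calc |(g b).re - (g a).re| = artanh (Real.tanh |(g b).re - (g a).re|) := (artanh_tanh _).symm
    _ ≤ artanh (‖(b - a) / (1 - conj' a * b)‖) :=
        artanh_le_artanh (tanh_nonneg (abs_nonneg _)) hfinal hμ
    _ = poincareDist a b := by
        unfold poincareDist
        congr 1
        rw [norm_div, norm_div, norm_sub_rev b a]

def kobSet {d : ℕ} (D : Set (EuclideanSpace ℂ (Fin d)))
    (x y : EuclideanSpace ℂ (Fin d)) : Set ℝ :=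
  {c : ℝ | ∃ (N : ℕ) (f : Fin (N + 1) → ℂ → EuclideanSpace ℂ (Fin d))
      (a b : Fin (N + 1) → ℂ),
    (∀ i, DifferentiableOn ℂ (f i) (Metric.ball (0 : ℂ) 1)) ∧
    (∀ i, Set.MapsTo (f i) (Metric.ball (0 : ℂ) 1) D) ∧
    (∀ i, a i ∈ Metric.ball (0 : ℂ) 1) ∧ (∀ i, b i ∈ Metric.ball (0 : ℂ) 1) ∧
    f 0 (a 0) = x ∧ f (Fin.last N) (b (Fin.last N)) = y ∧
    (∀ i : Fin N, f (Fin.castSucc i) (b (Fin.castSucc i)) = f (Fin.succ i) (a (Fin.succ i))) ∧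
    c = ∑ i, poincareDist (a i) (b i)}

lemma kobayashiDist_eq_sInf {d : ℕ} (D : Set (EuclideanSpace ℂ (Fin d)))
    (x y : EuclideanSpace ℂ (Fin d)) : kobayashiDist D x y = sInf (kobSet D x y) := rfl

lemma kobSet_bddBelow {d : ℕ} (D : Set (EuclideanSpace ℂ (Fin d)))
    (x y : EuclideanSpace ℂ (Fin d)) : BddBelow (kobSet D x y) := by
  refine ⟨0, ?_⟩
  rintro c ⟨N, f, a, b, -, -, -, -, -, -, -, rfl⟩
  exact Finset.sum_nonneg fun i _ => poincareDist_nonneg _ _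

lemma telescope_sum {N : ℕ} (s t : Fin (N+1) → ℝ)
    (h : ∀ i : Fin N, t i.castSucc = s i.succ) :
    ∑ i, (s i - t i) = s 0 - t (Fin.last N) := by
  rw [Finset.sum_sub_distrib, Fin.sum_univ_succ (f := s), Fin.sum_univ_castSucc (f := t)]
  have e : ∑ i : Fin N, t i.castSucc = ∑ i : Fin N, s i.succ :=
    Finset.sum_congr rfl fun i _ => h i
  rw [e]; ring

lemma ray_transfer {d : ℕ} {D : Set (EuclideanSpace ℂ (Fin d))} (hD_open : IsOpen D)
    (hD_conv : Convex ℝ D) {u x₀ : EuclideanSpace ℂ (Fin d)}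
    (hx₀ : x₀ ∈ D) (hray : ∀ t : ℝ, 0 ≤ t → x₀ + t • u ∈ D) :
    ∀ x ∈ D, ∀ t : ℝ, 0 ≤ t → x + t • u ∈ D := by
  intro x hx t ht
  obtain ⟨r, hr, hball⟩ := Metric.isOpen_iff.1 hD_open x hx
  set lam := r / (2*(‖x - x₀‖ + r)) with hlam
  have hden : 0 < ‖x - x₀‖ + r := by positivity
  have hlam0 : 0 < lam := by positivity
  have hlamhalf : lam ≤ 1/2 := by
    rw [hlam, div_le_iff₀ (by positivity)]
    nlinarith [norm_nonneg (x - x₀)]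
  have hlam1 : lam < 1 := by linarith
  set x' := x + (lam/(1-lam)) • (x - x₀) with hx'
  have hx'mem : x' ∈ D := by
    apply hball
    rw [mem_ball, dist_eq_norm, hx', add_sub_cancel_left, norm_smul, Real.norm_eq_abs,
      abs_of_nonneg (div_nonneg hlam0.le (by linarith))]
    have h2 : lam/(1-lam) ≤ 2*lam := by
      rw [div_le_iff₀ (by linarith)]
      nlinarith
    have h3 : 2*lam*‖x - x₀‖ < r := by
      have e : 2*lam*‖x - x₀‖ = r * ‖x - x₀‖/(‖x - x₀‖+r) := by
        rw [hlam]; field_simp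
      rw [e, div_lt_iff₀ hden]
      nlinarith [norm_nonneg (x - x₀)]
    calc lam/(1-lam) * ‖x - x₀‖ ≤ 2*lam*‖x - x₀‖ :=
          mul_le_mul_of_nonneg_right h2 (norm_nonneg _)
      _ < r := h3
  have hcomb := hD_conv hx'mem (hray (t/lam) (div_nonneg ht hlam0.le))
    (by linarith : (0:ℝ) ≤ 1 - lam) hlam0.le (by ring)
  have key : (1-lam) • x' + lam • (x₀ + (t/lam) • u) = x + t • u := by
    rw [hx', smul_add, smul_add, smul_smul, smul_smul]
    have c1 : (1-lam) * (lam/(1-lam)) = lam := by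
      rw [mul_comm]; exact div_mul_cancel₀ _ (sub_pos.2 hlam1).ne'
    have c2 : lam * (t/lam) = t := by field_simp
    rw [c1, c2, smul_sub, sub_smul, one_smul]
    abel
  rw [← key]; exact hcomb


set_option maxHeartbeats 1000000 in
/-- If `D ⊆ ℂ^d` is a convex domain whose set of (real) directions at
infinity is exactly `{v, −v}` for a unit vector `v`, then for every `z₀ ∈ D` the curve
`t ↦ z₀ + t • v` is an `(A,0)`-quasi-geodesic for the Kobayashi distance, for some `A ≥ 1`:
`(1/A)(b − a) ≤ K_D(z₀ + a•v, z₀ + b•v) ≤ A(b − a)` for all reals `a ≤ b`. -/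
theorem line_is_quasi_geodesic {d : ℕ} (D : Set (EuclideanSpace ℂ (Fin d)))
    (hD_open : IsOpen D) (hD_conn : IsConnected D) (hD_conv : Convex ℝ D)
    (v : EuclideanSpace ℂ (Fin d)) (hv : ‖v‖ = 1)
    (hdir : directionsAtInfinity D = {v, -v}) :
    ∀ z₀ ∈ D, ∃ A : ℝ, 1 ≤ A ∧ ∀ a b : ℝ, a ≤ b →
      (1 / A) * (b - a) ≤ kobayashiDist D (z₀ + a • v) (z₀ + b • v) ∧
      kobayashiDist D (z₀ + a • v) (z₀ + b • v) ≤ A * (b - a) := by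
  intro z₀ hz₀
  have hπ := Real.pi_pos
  -- v and -v are directions at infinity
  have hvdir : v ∈ directionsAtInfinity D := by rw [hdir]; exact mem_insert _ _
  have hnvdir : -v ∈ directionsAtInfinity D := by rw [hdir]; exact mem_insert_of_mem _ rfl
  -- the full line through any point of D in direction v lies in D
  have line_mem : ∀ x ∈ D, ∀ t : ℝ, x + t • v ∈ D := by
    intro x hx t
    rcases le_or_gt 0 t with h | h
    · obtain ⟨-, x₀, hx₀, hray⟩ := hvdir
      exact ray_transfer hD_open hD_conv hx₀ hray x hx t h
    · obtain ⟨-, x₀, hx₀, hray⟩ := hnvdir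
      have := ray_transfer hD_open hD_conv hx₀ hray x hx (-t) (by linarith)
      simpa using this
  -- the complex-linear functional
  set L : EuclideanSpace ℂ (Fin d) →L[ℂ] ℂ := innerSL ℂ v with hLdef
  have hLv : L v = 1 := by
    rw [hLdef, innerSL_apply_apply, inner_self_eq_norm_sq_to_K, hv]
    norm_num
  have hLsmul : ∀ (c : ℝ) (x : EuclideanSpace ℂ (Fin d)), L (c • x) = (c:ℂ) * L x := by
    intro c x
    rw [← Complex.coe_smul, map_smul, smul_eq_mul]
  have hLnorm : ∀ x, ‖L x‖ ≤ ‖x‖ := by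
    intro x
    calc ‖L x‖ = ‖(inner ℂ v x : ℂ)‖ := by rw [hLdef, innerSL_apply_apply]
      _ ≤ ‖v‖ * ‖x‖ := norm_inner_le_norm v x
      _ = ‖x‖ := by rw [hv, one_mul]
  -- Imaginary part of L(· - z₀) is bounded on D
  obtain ⟨M, hM0, hMb⟩ : ∃ M : ℝ, 0 < M ∧ ∀ z ∈ D, |(L (z - z₀)).im| < M := by
    by_contra hcon
    push_neg at hcon
    choose z hzD hz using fun n : ℕ => hcon ((n:ℝ)+1) (by positivity)
    set w : ℕ → EuclideanSpace ℂ (Fin d) :=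
      fun n => z n + (-(L (z n - z₀)).re) • v with hw
    have hwD : ∀ n, w n ∈ D := fun n => line_mem _ (hzD n) _
    have hLw : ∀ n, L (w n - z₀) = L (z n - z₀) - ((L (z n - z₀)).re : ℂ) := by
      intro n
      have e : w n - z₀ = (z n - z₀) + (-(L (z n - z₀)).re) • v := by rw [hw]; exact add_sub_right_comm _ _ _
      rw [e, map_add, hLsmul, hLv, mul_one]
      push_cast
      ring
    have hre : ∀ n, (L (w n - z₀)).re = 0 := by intro n; rw [hLw]; simp
    have him : ∀ n, (L (w n - z₀)).im = (L (z n - z₀)).im := by intro n; rw [hLw]; simp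
    have hnorm : ∀ n : ℕ, (n:ℝ) + 1 ≤ ‖w n - z₀‖ := by
      intro n
      calc (n:ℝ)+1 ≤ |(L (z n - z₀)).im| := hz n
        _ = |(L (w n - z₀)).im| := by rw [him]
        _ ≤ ‖L (w n - z₀)‖ := Complex.abs_im_le_norm _
        _ = ‖L (w n - z₀)‖ := rfl
        _ ≤ ‖w n - z₀‖ := hLnorm _
    have hpos : ∀ n, 0 < ‖w n - z₀‖ := fun n =>
      lt_of_lt_of_le (by positivity) (hnorm n)
    set u : ℕ → EuclideanSpace ℂ (Fin d) := fun n => ‖w n - z₀‖⁻¹ • (w n - z₀) with hu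
    have husph : ∀ n, u n ∈ sphere (0 : EuclideanSpace ℂ (Fin d)) 1 := by
      intro n
      rw [mem_sphere_zero_iff_norm, hu, norm_smul, norm_inv, norm_norm,
        inv_mul_cancel₀ (hpos n).ne']
    obtain ⟨uu, huus, φ, hφmono, hφtend⟩ :=
      (isCompact_sphere (0 : EuclideanSpace ℂ (Fin d)) 1).tendsto_subseq husph
    have hclos : ∀ t : ℝ, 0 ≤ t → z₀ + t • uu ∈ closure D := by
      intro t ht
      apply mem_closure_of_tendsto
        (tendsto_const_nhds.add (hφtend.const_smul t))
      filter_upwards [eventually_ge_atTop ⌈t⌉₊] with n hn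
      have h1 : t ≤ ‖w (φ n) - z₀‖ := by
        calc t ≤ (⌈t⌉₊ : ℝ) := Nat.le_ceil t
          _ ≤ (n:ℝ) := by exact_mod_cast hn
          _ ≤ (φ n : ℝ) := by exact_mod_cast hφmono.id_le n
          _ ≤ (φ n : ℝ) + 1 := by linarith
          _ ≤ _ := hnorm (φ n)
      have hρ := hpos (φ n)
      have hcomb := hD_conv hz₀ (hwD (φ n))
        (by rw [sub_nonneg, div_le_one hρ]; exact h1 : (0:ℝ) ≤ 1 - t/‖w (φ n) - z₀‖)
        (by positivity : (0:ℝ) ≤ t/‖w (φ n) - z₀‖) (by ring)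
      have e : (1 - t/‖w (φ n) - z₀‖) • z₀ + (t/‖w (φ n) - z₀‖) • (w (φ n))
          = z₀ + t • u (φ n) := by
        rw [hu]
        rw [smul_smul, ← div_eq_mul_inv, smul_sub, sub_smul, one_smul]
        abel
      show z₀ + t • ((u ∘ φ) n) ∈ D
      exact e ▸ hcomb
    have huudir : uu ∈ directionsAtInfinity D := by
      refine ⟨mem_sphere_zero_iff_norm.1 huus, z₀, hz₀, ?_⟩
      intro t ht
      rcases eq_or_lt_of_le ht with heq | ht'
      · rw [← heq]; simpa using hz₀
      · have hcl := hclos (t+1) (by linarith)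
        have hmem := hD_conv.combo_interior_closure_mem_interior
          (by rwa [hD_open.interior_eq]) hcl
          (a := 1 - t/(t+1)) (b := t/(t+1))
          (by rw [sub_pos, div_lt_one (by linarith)]; linarith)
          (by positivity) (by ring)
        have e : (1 - t/(t+1)) • z₀ + (t/(t+1)) • (z₀ + (t+1) • uu) = z₀ + t • uu := by
          rw [smul_add, smul_smul]
          have c1 : t/(t+1) * (t+1) = t := by field_simp
          rw [c1, sub_smul, one_smul]
          abel
        rw [e] at hmem
        rw [← hD_open.interior_eq]
        exact hmem
    rw [hdir] at huudir
    have hre_u0 : ∀ n, (L (u n)).re = 0 := by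
      intro n
      rw [hu, hLsmul]
      simp only [Complex.mul_re, Complex.ofReal_re, Complex.ofReal_im, hre n,
        mul_zero, zero_mul, sub_zero]
    have hcont : Continuous fun x : EuclideanSpace ℂ (Fin d) => (L x).re :=
      Complex.continuous_re.comp L.continuous
    have htd : Tendsto (fun n => (L (u (φ n))).re) atTop (𝓝 ((L uu).re)) :=
      (hcont.tendsto uu).comp hφtend
    have hL0 : (L uu).re = 0 := by
      have : Tendsto (fun _ : ℕ => (0:ℝ)) atTop (𝓝 ((L uu).re)) := by
        simpa [hre_u0] using htd
      exact tendsto_nhds_unique this tendsto_const_nhds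
    rcases huudir with h | h
    · rw [h, hLv] at hL0; simp at hL0
    · rw [h, map_neg, hLv] at hL0; simp at hL0
  -- the slice of D through z₀ in the complex direction v
  set Ω : Set ℂ := (fun ζ : ℂ => z₀ + ζ • v) ⁻¹' D with hΩdef
  have hΩ_open : IsOpen Ω :=
    hD_open.preimage (continuous_const.add (continuous_id.smul continuous_const))
  have hΩ_conv : Convex ℝ Ω := by
    intro ζ1 h1 ζ2 h2 sc tc hs ht hst
    show z₀ + (sc • ζ1 + tc • ζ2) • v ∈ D
    have key : z₀ + (sc • ζ1 + tc • ζ2) • v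
        = sc • (z₀ + ζ1 • v) + tc • (z₀ + ζ2 • v) := by
      rw [add_smul, smul_assoc, smul_assoc, smul_add, smul_add]
      have e : sc • z₀ + tc • z₀ = z₀ := by rw [← add_smul, hst, one_smul]
      nth_rewrite 1 [← e]
      abel
    rw [key]
    exact hD_conv h1 h2 hs ht hst
  have hΩ_real : ∀ t : ℝ, (t:ℂ) ∈ Ω := by
    intro t
    show z₀ + (t:ℂ) • v ∈ D
    rw [Complex.coe_smul]
    exact line_mem z₀ hz₀ t
  have h0Ω : (0:ℂ) ∈ Ω := by simpa using hΩ_real 0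
  obtain ⟨δ, hδ, hδball⟩ := Metric.isOpen_iff.1 hΩ_open 0 h0Ω
  have hstrip : ∀ ξ : ℂ, |ξ.im| < δ → ξ ∈ Ω := by
    intro ξ hξ
    by_cases h0 : ξ.im = 0
    · have e : ξ = ((ξ.re : ℝ) : ℂ) := by
        apply Complex.ext <;> simp [h0]
      rw [e]; exact hΩ_real ξ.re
    · set lam := (|ξ.im|/δ + 1)/2 with hlam
      have h1 : |ξ.im|/δ < 1 := (div_lt_one hδ).2 hξ
      have h2 : 0 < |ξ.im|/δ := div_pos (abs_pos.2 h0) hδ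
      have hlam0 : 0 < lam := by rw [hlam]; linarith
      have hlam1 : lam < 1 := by rw [hlam]; linarith
      have hmemq : ((ξ.im/lam : ℝ) : ℂ) * Complex.I ∈ Ω := by
        apply hδball
        rw [mem_ball_zero_iff, norm_mul, Complex.norm_I, mul_one, Complex.norm_real,
          Real.norm_eq_abs, abs_div, abs_of_pos hlam0, div_lt_iff₀ hlam0]
        have e : δ * lam = (|ξ.im| + δ)/2 := by rw [hlam]; field_simp
        rw [e]
        linarith
      have hmemr : ((ξ.re/(1-lam) : ℝ) : ℂ) ∈ Ω := hΩ_real _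
      have hcomb := hΩ_conv hmemr hmemq (by linarith : (0:ℝ) ≤ 1-lam) hlam0.le
        (by ring)
      have e : (1-lam) • ((ξ.re/(1-lam) : ℝ) : ℂ)
          + lam • (((ξ.im/lam : ℝ) : ℂ) * Complex.I) = ξ := by
        have hne1 : (1:ℝ)-lam ≠ 0 := (sub_pos.2 hlam1).ne'
        have hne2 : lam ≠ 0 := hlam0.ne'
        rw [Complex.real_smul, Complex.real_smul]
        apply Complex.ext
        · simp only [Complex.add_re, Complex.mul_re, Complex.ofReal_re, Complex.ofReal_im,
            Complex.I_re, Complex.I_im, Complex.mul_im]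
          field_simp
          ring
        · simp only [Complex.add_im, Complex.mul_re, Complex.ofReal_re, Complex.ofReal_im,
            Complex.I_re, Complex.I_im, Complex.mul_im]
          field_simp
          ring
      rwa [e] at hcomb
  -- the analytic disc
  set κ : ℝ := 2*δ/Real.pi with hκ
  have hκ0 : 0 < κ := by positivity
  have hne1 : ∀ ζ ∈ ball (0:ℂ) 1, (1:ℂ) - ζ ≠ 0 := by
    intro ζ hζ
    rw [mem_ball_zero_iff] at hζ
    intro h
    have e : ζ = 1 := by linear_combination -h
    rw [e] at hζ; simp at hζ
  have hre_pos : ∀ ζ ∈ ball (0:ℂ) 1, 0 < ((1+ζ)/(1-ζ)).re := by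
    intro ζ hζ
    have hne := hne1 ζ hζ
    rw [mem_ball_zero_iff] at hζ
    rw [Complex.div_re]
    have hnum : (1+ζ).re * (1-ζ).re / Complex.normSq (1-ζ)
        + (1+ζ).im * (1-ζ).im / Complex.normSq (1-ζ)
        = (1 - Complex.normSq ζ) / Complex.normSq (1-ζ) := by
      rw [← add_div]
      congr 1
      simp only [Complex.normSq_apply, Complex.add_re, Complex.add_im, Complex.sub_re,
        Complex.sub_im, Complex.one_re, Complex.one_im]
      ring
    rw [hnum]
    apply div_pos
    · have e : Complex.normSq ζ < 1 := by
        rw [← Complex.sq_norm]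
        have : ‖ζ‖ < 1 := hζ
        nlinarith [norm_nonneg ζ]
      linarith
    · exact Complex.normSq_pos.2 hne
  set g0 : ℂ → ℂ := fun ζ => ((κ : ℝ) : ℂ) * Complex.log ((1+ζ)/(1-ζ)) with hg0
  set f₀ : ℂ → EuclideanSpace ℂ (Fin d) := fun ζ => z₀ + g0 ζ • v with hf₀
  have hg0_diff : DifferentiableOn ℂ g0 (ball 0 1) := by
    apply DifferentiableOn.const_mul
    intro ζ hζ
    apply DifferentiableAt.differentiableWithinAt
    have hq : DifferentiableAt ℂ (fun ζ : ℂ => (1+ζ)/(1-ζ)) ζ :=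
      ((differentiableAt_const _).add differentiableAt_id).div
        ((differentiableAt_const _).sub differentiableAt_id) (hne1 ζ hζ)
    have hl : DifferentiableAt ℂ Complex.log ((1+ζ)/(1-ζ)) :=
      Complex.differentiableAt_log (by
        rw [Complex.mem_slitPlane_iff]; exact Or.inl (hre_pos ζ hζ))
    exact hl.comp ζ hq
  have hg0_im : ∀ ζ ∈ ball (0:ℂ) 1, |(g0 ζ).im| < δ := by
    intro ζ hζ
    have e : (g0 ζ).im = κ * (Complex.log ((1+ζ)/(1-ζ))).im := by
      rw [hg0]
      simp [Complex.mul_im]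
    rw [e, abs_mul, abs_of_pos hκ0, Complex.log_im]
    have harg : |Complex.arg ((1+ζ)/(1-ζ))| < Real.pi/2 :=
      Complex.abs_arg_lt_pi_div_two_iff.2 (Or.inl (hre_pos ζ hζ))
    calc κ * |Complex.arg ((1+ζ)/(1-ζ))| < κ * (Real.pi/2) :=
          mul_lt_mul_of_pos_left harg hκ0
      _ = δ := by rw [hκ]; field_simp
  have hf₀_diff : DifferentiableOn ℂ f₀ (ball 0 1) := by
    apply DifferentiableOn.const_add
    exact hg0_diff.smul_const v
  have hf₀_maps : MapsTo f₀ (ball 0 1) D := fun ζ hζ => hstrip (g0 ζ) (hg0_im ζ hζ)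
  have hf₀_val : ∀ T : ℝ, f₀ ((Real.tanh T : ℝ) : ℂ) = z₀ + (2*κ*T) • v := by
    intro T
    have hexp := Real.exp_pos (2*T)
    have hr : (1 + Real.tanh T)/(1 - Real.tanh T) = Real.exp (2*T) := by
      rw [Real.tanh_eq_exp]
      have d1 : Real.exp (2*T) + 1 ≠ 0 := by positivity
      field_simp
      ring
    have h1 : ((1:ℂ) + ((Real.tanh T : ℝ) : ℂ))/(1 - ((Real.tanh T : ℝ):ℂ))
        = ((Real.exp (2*T) : ℝ) : ℂ) := by
      rw [← hr]
      push_cast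
      ring
    simp only [hf₀, hg0]
    rw [h1, ← Complex.ofReal_log hexp.le, Real.log_exp, ← Complex.coe_smul]
    congr 1
    push_cast
    ring
  -- the one-disc chain realizing the upper bound
  have hchain_mem : ∀ a b : ℝ, |a/(2*κ) - b/(2*κ)| ∈ kobSet D (z₀ + a • v) (z₀ + b • v) := by
    intro a b
    refine ⟨0, fun _ => f₀, fun _ => ((Real.tanh (a/(2*κ)) : ℝ) : ℂ),
      fun _ => ((Real.tanh (b/(2*κ)) : ℝ) : ℂ), fun _ => hf₀_diff, fun _ => hf₀_maps,
      fun _ => ?_, fun _ => ?_, ?_, ?_, fun i => i.elim0, ?_⟩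
    · rw [mem_ball_zero_iff, Complex.norm_real, Real.norm_eq_abs]
      exact abs_tanh_lt_one _
    · rw [mem_ball_zero_iff, Complex.norm_real, Real.norm_eq_abs]
      exact abs_tanh_lt_one _
    · show f₀ ((Real.tanh (a/(2*κ)) : ℝ) : ℂ) = z₀ + a • v
      rw [hf₀_val]
      have e : 2*κ*(a/(2*κ)) = a := by field_simp
      rw [e]
    · show f₀ ((Real.tanh (b/(2*κ)) : ℝ) : ℂ) = z₀ + b • v
      rw [hf₀_val]
      have e : 2*κ*(b/(2*κ)) = b := by field_simp
      rw [e]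
    · simp only [Fin.sum_univ_one, poincareDist_tanh]
      simp
  have hne_kob : ∀ a b : ℝ, (kobSet D (z₀ + a • v) (z₀ + b • v)).Nonempty :=
    fun a b => ⟨_, hchain_mem a b⟩
  -- the lower bound for every chain
  have hlow : ∀ a b : ℝ, a ≤ b → ∀ c ∈ kobSet D (z₀ + a • v) (z₀ + b • v),
      Real.pi/(4*M) * (b-a) ≤ c := by
    intro a b hab c hc
    obtain ⟨N, f, aa, bb, hfd, hfm, haa, hbb, hx, hy, hch, rfl⟩ := hc
    set s : Fin (N+1) → ℝ := fun i => (L (f i (aa i))).re with hsdef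
    set t : Fin (N+1) → ℝ := fun i => (L (f i (bb i))).re with htdef
    have hper : ∀ i, Real.pi/(4*M) * |s i - t i| ≤ poincareDist (aa i) (bb i) := by
      intro i
      set g : ℂ → ℂ := fun ζ => ((Real.pi/(4*M) : ℝ) : ℂ) * (L (f i ζ) - L z₀) with hgdef
      have hgd : DifferentiableOn ℂ g (ball 0 1) := by
        apply DifferentiableOn.const_mul
        exact (L.differentiable.comp_differentiableOn (hfd i)).sub_const (L z₀)
      have hgim : ∀ ζ ∈ ball (0:ℂ) 1, |(g ζ).im| < Real.pi/4 := by
        intro ζ hζ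
        have e : (g ζ).im = (Real.pi/(4*M)) * (L (f i ζ - z₀)).im := by
          simp only [hgdef, map_sub]
          rw [Complex.mul_im, Complex.ofReal_re, Complex.ofReal_im, zero_mul, add_zero]
        rw [e, abs_mul, abs_of_pos (by positivity)]
        have hbnd := hMb (f i ζ) (hfm i hζ)
        calc Real.pi/(4*M) * |(L (f i ζ - z₀)).im| < Real.pi/(4*M) * M :=
              mul_lt_mul_of_pos_left hbnd (by positivity)
          _ = Real.pi/4 := by field_simp
      have hsp := strip_re_bound hgd hgim (haa i) (hbb i)
      have e2 : (g (bb i)).re - (g (aa i)).re = (Real.pi/(4*M)) * (t i - s i) := by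
        simp only [hgdef, htdef, hsdef, Complex.mul_re, Complex.sub_re, Complex.sub_im,
          Complex.ofReal_re, Complex.ofReal_im, zero_mul, sub_zero]
        ring
      rw [e2, abs_mul, abs_of_pos (by positivity : (0:ℝ) < Real.pi/(4*M)),
        abs_sub_comm (t i) (s i)] at hsp
      exact hsp
    have hts : ∀ i : Fin N, t i.castSucc = s i.succ := by
      intro i
      simp only [htdef, hsdef]
      exact congrArg (fun w => (L w).re) (hch i)
    have hLa : (L (z₀ + a • v)).re = (L z₀).re + a := by
      rw [map_add, hLsmul, hLv, mul_one, Complex.add_re, Complex.ofReal_re]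
    have hLb : (L (z₀ + b • v)).re = (L z₀).re + b := by
      rw [map_add, hLsmul, hLv, mul_one, Complex.add_re, Complex.ofReal_re]
    have hsum1 : ∑ i, (s i - t i) = a - b := by
      rw [telescope_sum s t hts]
      have e1 : s 0 = (L z₀).re + a := by
        simp only [hsdef]
        rw [hx, hLa]
      have e2 : t (Fin.last N) = (L z₀).re + b := by
        simp only [htdef]
        rw [hy, hLb]
      rw [e1, e2]; ring
    calc Real.pi/(4*M) * (b-a) = Real.pi/(4*M) * |∑ i, (s i - t i)| := by
          rw [hsum1, abs_of_nonpos (by linarith)]; ring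
      _ ≤ Real.pi/(4*M) * ∑ i, |s i - t i| :=
          mul_le_mul_of_nonneg_left (Finset.abs_sum_le_sum_abs _ _) (by positivity)
      _ = ∑ i, Real.pi/(4*M) * |s i - t i| := Finset.mul_sum _ _ _
      _ ≤ ∑ i, poincareDist (aa i) (bb i) := Finset.sum_le_sum fun i _ => hper i
  -- assemble
  refine ⟨max (max (1/(2*κ)) (4*M/Real.pi)) 1, le_max_right _ _, ?_⟩
  intro a b hab
  set A := max (max (1/(2*κ)) (4*M/Real.pi)) 1 with hA
  have hA0 : 0 < A := lt_of_lt_of_le one_pos (le_max_right _ _)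
  have hba : 0 ≤ b - a := by linarith
  constructor
  · have h1 : Real.pi/(4*M)*(b-a) ≤ kobayashiDist D (z₀ + a • v) (z₀ + b • v) := by
      rw [kobayashiDist_eq_sInf]
      exact le_csInf (hne_kob a b) (hlow a b hab)
    have hAM : 4*M/Real.pi ≤ A := le_trans (le_max_right _ _) (le_max_left _ _)
    have h2 : (1/A)*(b-a) ≤ Real.pi/(4*M)*(b-a) := by
      apply mul_le_mul_of_nonneg_right _ hba
      rw [div_le_div_iff₀ hA0 (by positivity : (0:ℝ) < 4*M)]
      rw [div_le_iff₀ hπ] at hAM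
      nlinarith
    linarith
  · have h1 : kobayashiDist D (z₀ + a • v) (z₀ + b • v) ≤ |a/(2*κ) - b/(2*κ)| := by
      rw [kobayashiDist_eq_sInf]
      exact csInf_le (kobSet_bddBelow D _ _) (hchain_mem a b)
    have e : |a/(2*κ) - b/(2*κ)| = (1/(2*κ))*(b-a) := by
      have hle : a/(2*κ) ≤ b/(2*κ) := by gcongr
      rw [abs_of_nonpos (sub_nonpos.2 hle)]
      field_simp
      ring
    have h2 : (1/(2*κ))*(b-a) ≤ A*(b-a) :=
      mul_le_mul_of_nonneg_right (le_trans (le_max_left _ _) (le_max_left _ _)) hba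
    linarith


end
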